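/- Let $V$ be a finite-dimensional real vector space and $X \subset V \setminus \{0\}$ with $\operatorname{span}_{\ge 0}X \cap (-\operatorname{span}_{\ge 0}X) = \{0\}$. Then for any convex preorder $\preceq$ on $X$, there exists a convex order on $X$ refining $\preceq$. -/

import Mathlib

open scoped BigOperators

/-- `nnspan S` is the set of finite linear combinations of elements of `S`
with non-negative real coefficients (by convention `nnspan ∅ = {0}`). -/
def nnspan {V : Type*} [AddCommGroup V] [Module ℝ V] (S : Set V) : Set V :=
  {x | ∃ (n : ℕ) (c : Fin n → ℝ) (v : Fin n → V),
    (∀ i, 0 ≤ c i) ∧ (∀ i, v i ∈ S) ∧ x = ∑ i, c i • v i}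

/-- Minkowski sum of two subsets of `V`. -/
def setAdd {V : Type*} [AddCommGroup V] [Module ℝ V] (A B : Set V) : Set V :=
  {z | ∃ a ∈ A, ∃ b ∈ B, z = a + b}

/-- Elements of `X` strictly below `x` for the preorder `le`. -/
def strictBelow {V : Type*} [AddCommGroup V] [Module ℝ V]
    (le : V → V → Prop) (x : V) (X : Set V) : Set V :=
  {y ∈ X | le y x ∧ ¬ le x y}

/-- Elements of `X` strictly above `x` for the preorder `le`. -/
def strictAbove {V : Type*} [AddCommGroup V] [Module ℝ V]
    (le : V → V → Prop) (x : V) (X : Set V) : Set V :=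
  {y ∈ X | le x y ∧ ¬ le y x}

/-- The `le`-equivalence class of `x` inside `X`. -/
def eqClass {V : Type*} [AddCommGroup V] [Module ℝ V]
    (le : V → V → Prop) (x : V) (X : Set V) : Set V :=
  {y ∈ X | le x y ∧ le y x}

/-- A convex preorder on `X ⊆ V \ {0}`: a total preorder on `X` such that for every
equivalence class `𝒞`, the triple (strictly below `𝒞`, `𝒞`, strictly above `𝒞`) is a
face, i.e. for any non-negative combinations `x₋` (of the strictly-below set) and `x₊`
(of the strictly-above set) with `x₋ - x₊ ∈ span ℝ 𝒞`, one has `x₋ = x₊ = 0`. -/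
def IsConvexPreorder {V : Type*} [AddCommGroup V] [Module ℝ V]
    (X : Set V) (le : V → V → Prop) : Prop :=
  (∀ x ∈ X, le x x) ∧
  (∀ x ∈ X, ∀ y ∈ X, ∀ z ∈ X, le x y → le y z → le x z) ∧
  (∀ x ∈ X, ∀ y ∈ X, le x y ∨ le y x) ∧
  (∀ x ∈ X, ∀ xm ∈ nnspan (strictBelow le x X), ∀ xp ∈ nnspan (strictAbove le x X),
    xm - xp ∈ Submodule.span ℝ (eqClass le x X) → xm = 0 ∧ xp = 0)



universe u

namespace CvxAux



section NN
variable {V : Type*} [AddCommGroup V] [Module ℝ V]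

theorem nnspan_zero_mem (S : Set V) : (0 : V) ∈ nnspan S :=
  ⟨0, Fin.elim0, Fin.elim0, fun i => i.elim0, fun i => i.elim0, by simp⟩

theorem mem_nnspan_self {S : Set V} {x : V} (hx : x ∈ S) : x ∈ nnspan S :=
  ⟨1, fun _ => 1, fun _ => x, fun _ => zero_le_one, fun _ => hx, by simp⟩

theorem nnspan_smul_mem {S : Set V} {x : V} {t : ℝ} (ht : 0 ≤ t) (hx : x ∈ nnspan S) :
    t • x ∈ nnspan S := by
  obtain ⟨n, c, v, hc, hv, rfl⟩ := hx
  exact ⟨n, fun i => t * c i, v, fun i => mul_nonneg ht (hc i), hv, by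
    rw [Finset.smul_sum]; simp [mul_smul]⟩

theorem nnspan_add_mem {S : Set V} {x y : V} (hx : x ∈ nnspan S) (hy : y ∈ nnspan S) :
    x + y ∈ nnspan S := by
  obtain ⟨n, c, v, hc, hv, rfl⟩ := hx
  obtain ⟨p, d, w, hd, hw, rfl⟩ := hy
  refine ⟨n + p, Fin.append c d, Fin.append v w, ?_, ?_, ?_⟩
  · exact Fin.addCases (fun i => by simpa using hc i) (fun i => by simpa using hd i)
  · exact Fin.addCases (fun i => by simpa using hv i) (fun i => by simpa using hw i)
  · rw [Fin.sum_univ_add]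
    simp

theorem nnspan_mono {S T : Set V} (h : S ⊆ T) : nnspan S ⊆ nnspan T := by
  rintro x ⟨n, c, v, hc, hv, rfl⟩
  exact ⟨n, c, v, hc, fun i => h (hv i), rfl⟩

theorem nnspan_map {W : Type*} [AddCommGroup W] [Module ℝ W] (L : V →ₗ[ℝ] W) {S : Set V}
    {x : V} (hx : x ∈ nnspan S) : L x ∈ nnspan (L '' S) := by
  obtain ⟨n, c, v, hc, hv, rfl⟩ := hx
  exact ⟨n, c, fun i => L (v i), hc, fun i => ⟨v i, hv i, rfl⟩, by simp [map_sum]⟩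

theorem nnspan_subset_span {S : Set V} : nnspan S ⊆ (Submodule.span ℝ S : Set V) := by
  rintro x ⟨n, c, v, hc, hv, rfl⟩
  exact Submodule.sum_mem _ fun i _ =>
    Submodule.smul_mem _ _ (Submodule.subset_span (hv i))

theorem nnspan_convex (S : Set V) : Convex ℝ (nnspan S) := by
  intro x hx y hy a b ha hb _
  exact nnspan_add_mem (nnspan_smul_mem ha hx) (nnspan_smul_mem hb hy)

/-- `nnspan` as the additive submonoid generated by nonneg multiples. -/
def nnspanM (S : Set V) : AddSubmonoid V where
  carrier := nnspan S
  zero_mem' := nnspan_zero_mem S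
  add_mem' := nnspan_add_mem

theorem nnspan_eq_closure (S : Set V) :
    nnspan S = (AddSubmonoid.closure {w | ∃ (c : ℝ) (x : V), 0 ≤ c ∧ x ∈ S ∧ w = c • x} : Set V) := by
  apply le_antisymm
  · rintro x ⟨n, c, v, hc, hv, rfl⟩
    exact AddSubmonoid.sum_mem _ fun i _ =>
      AddSubmonoid.subset_closure ⟨c i, v i, hc i, hv i, rfl⟩
  · intro x hx
    refine AddSubmonoid.closure_induction (motive := fun x _ => x ∈ nnspanM S) ?_ ?_ ?_ hx
    · rintro w ⟨c, y, hc, hy, rfl⟩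
      exact nnspan_smul_mem hc (mem_nnspan_self hy)
    · exact nnspan_zero_mem S
    · intro a b _ _ ha hb
      exact nnspan_add_mem ha hb

theorem nnspan_union_split {A B : Set V} {x : V} (hx : x ∈ nnspan (A ∪ B)) :
    ∃ a ∈ nnspan A, ∃ b ∈ nnspan B, x = a + b := by
  have h1 : {w : V | ∃ (c : ℝ) (y : V), 0 ≤ c ∧ y ∈ A ∪ B ∧ w = c • y}
      = {w : V | ∃ (c : ℝ) (y : V), 0 ≤ c ∧ y ∈ A ∧ w = c • y} ∪ {w : V | ∃ (c : ℝ) (y : V), 0 ≤ c ∧ y ∈ B ∧ w = c • y} := by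
    ext w
    constructor
    · rintro ⟨c, y, hc, hy | hy, rfl⟩
      · exact Or.inl ⟨c, y, hc, hy, rfl⟩
      · exact Or.inr ⟨c, y, hc, hy, rfl⟩
    · rintro (⟨c, y, hc, hy, rfl⟩ | ⟨c, y, hc, hy, rfl⟩)
      exacts [⟨c, y, hc, Or.inl hy, rfl⟩, ⟨c, y, hc, Or.inr hy, rfl⟩]
  rw [nnspan_eq_closure] at hx
  rw [h1, AddSubmonoid.closure_union] at hx
  rw [SetLike.mem_coe, AddSubmonoid.mem_sup] at hx
  obtain ⟨a, ha, b, hb, hab⟩ := hx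
  have ha' : a ∈ nnspan A := by rw [nnspan_eq_closure]; exact ha
  have hb' : b ∈ nnspan B := by rw [nnspan_eq_closure]; exact hb
  exact ⟨a, ha', b, hb', hab.symm⟩


end NN

section LexBasics
variable {m : ℕ}
/-- `w` is lexicographically positive. -/
def LexPos (w : Fin m → ℝ) : Prop := ∃ i, (∀ j, j < i → w j = 0) ∧ 0 < w i

/-- `w` is lexicographically nonnegative. -/
def LexNN (w : Fin m → ℝ) : Prop := w = 0 ∨ LexPos w

/-- `k` is the least index where `w` is nonzero. -/
def Least (w : Fin m → ℝ) (k : Fin m) : Prop := (∀ j, j < k → w j = 0) ∧ w k ≠ 0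

theorem least_unique {w : Fin m → ℝ} {k k' : Fin m} (h : Least w k) (h' : Least w k') :
    k = k' := by
  rcases lt_trichotomy k k' with hlt | he | hlt
  · exact absurd (h'.1 k hlt) h.2
  · exact he
  · exact absurd (h.1 k' hlt) h'.2

theorem lexPos_least {w : Fin m → ℝ} (h : LexPos w) : ∃ k, Least w k ∧ 0 < w k := by
  obtain ⟨i, hi, hpos⟩ := h
  exact ⟨i, ⟨hi, ne_of_gt hpos⟩, hpos⟩

theorem lexPos_pos_of_least {w : Fin m → ℝ} {k : Fin m} (h : LexPos w) (hk : Least w k) :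
    0 < w k := by
  obtain ⟨k', hk', hpos⟩ := lexPos_least h
  rwa [least_unique hk hk']

theorem lexPos_ne_zero {w : Fin m → ℝ} (h : LexPos w) : w ≠ 0 := by
  obtain ⟨i, _, hpos⟩ := h
  intro h0
  rw [h0] at hpos
  exact lt_irrefl 0 hpos

theorem least_neg {w : Fin m → ℝ} {k : Fin m} (h : Least w k) : Least (-w) k :=
  ⟨fun j hj => by simp [h.1 j hj], by simpa using h.2⟩

theorem not_lexPos_neg {w : Fin m → ℝ} (h : LexPos w) : ¬ LexPos (-w) := by
  intro h'
  obtain ⟨k, hk, hpos⟩ := lexPos_least h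
  obtain ⟨k', hk', hpos'⟩ := lexPos_least h'
  have : k = k' := least_unique hk (by simpa using least_neg hk')
  subst this
  simp only [Pi.neg_apply] at hpos'
  linarith

theorem lexPos_trichotomy (w : Fin m → ℝ) : w = 0 ∨ LexPos w ∨ LexPos (-w) := by
  by_cases h0 : w = 0
  · exact Or.inl h0
  right
  have hne : (Finset.univ.filter (fun i => w i ≠ 0)).Nonempty := by
    rw [Finset.filter_nonempty_iff]
    by_contra hc
    push_neg at hc
    exact h0 (funext fun i => hc i (Finset.mem_univ i))
  set k := (Finset.univ.filter (fun i => w i ≠ 0)).min' hne with hkdef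
  have hkmem := (Finset.univ.filter (fun i => w i ≠ 0)).min'_mem hne
  rw [Finset.mem_filter] at hkmem
  have hbelow : ∀ j, j < k → w j = 0 := by
    intro j hj
    by_contra hw
    have : k ≤ j := Finset.min'_le _ _ (Finset.mem_filter.mpr ⟨Finset.mem_univ j, hw⟩)
    exact absurd hj (not_lt.mpr this)
  rcases lt_trichotomy (w k) 0 with h | h | h
  · exact Or.inr ⟨k, fun j hj => by simp [hbelow j hj], by simpa using h⟩
  · exact absurd h hkmem.2
  · exact Or.inl ⟨k, hbelow, h⟩

theorem lexNN_neg_eq_zero {w : Fin m → ℝ} (h : LexNN w) (h' : LexNN (-w)) : w = 0 := by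
  rcases h with h | h
  · exact h
  rcases h' with h' | h'
  · simpa using congrArg Neg.neg h'
  · exact absurd h' (not_lexPos_neg h)

theorem lexPos_add {a b : Fin m → ℝ} (ha : LexPos a) (hb : LexPos b) : LexPos (a + b) := by
  obtain ⟨k, hk, hkpos⟩ := lexPos_least ha
  obtain ⟨l, hl, hlpos⟩ := lexPos_least hb
  rcases lt_trichotomy k l with h | h | h
  · exact ⟨k, fun j hj => by simp [hk.1 j hj, hl.1 j (hj.trans h)],
      by simp [hl.1 k h]; linarith⟩
  · subst h
    exact ⟨k, fun j hj => by simp [hk.1 j hj, hl.1 j hj], by simp; positivity⟩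
  · exact ⟨l, fun j hj => by simp [hl.1 j hj, hk.1 j (hj.trans h)],
      by simp [hk.1 l h]; linarith⟩

theorem lexNN_add {a b : Fin m → ℝ} (ha : LexNN a) (hb : LexNN b) : LexNN (a + b) := by
  rcases ha with rfl | ha
  · simpa using hb
  rcases hb with rfl | hb
  · rw [add_zero]; exact Or.inr ha
  · exact Or.inr (lexPos_add ha hb)

theorem lexPos_smul {a : Fin m → ℝ} {c : ℝ} (hc : 0 < c) (ha : LexPos a) : LexPos (c • a) := by
  obtain ⟨i, hi, hpos⟩ := ha
  exact ⟨i, fun j hj => by simp [hi j hj], by simpa using mul_pos hc hpos⟩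

theorem lexNN_smul {a : Fin m → ℝ} {c : ℝ} (hc : 0 ≤ c) (ha : LexNN a) : LexNN (c • a) := by
  rcases ha with rfl | ha
  · simp [LexNN]
  rcases eq_or_lt_of_le hc with rfl | hc
  · simp [LexNN]
  · exact Or.inr (lexPos_smul hc ha)

theorem lexNN_sum {ι : Type*} (s : Finset ι) (f : ι → (Fin m → ℝ))
    (h : ∀ i ∈ s, LexNN (f i)) : LexNN (∑ i ∈ s, f i) := by
  classical
  induction s using Finset.induction_on with
  | empty => simp [LexNN]
  | @insert a s' hx ih =>
    rw [Finset.sum_insert hx]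
    exact lexNN_add (h a (Finset.mem_insert_self a s'))
      (ih fun i hi => h i (Finset.mem_insert_of_mem hi))

theorem lexNN_sum_eq_zero {ι : Type*} (s : Finset ι) (f : ι → (Fin m → ℝ))
    (h : ∀ i ∈ s, LexNN (f i)) (hsum : ∑ i ∈ s, f i = 0) : ∀ i ∈ s, f i = 0 := by
  classical
  induction s using Finset.induction_on with
  | empty => simp
  | @insert a s' hx ih =>
    rw [Finset.sum_insert hx] at hsum
    have h1 : LexNN (f a) := h a (Finset.mem_insert_self a s')
    have h2 : LexNN (∑ i ∈ s', f i) := lexNN_sum s' f fun i hi => h i (Finset.mem_insert_of_mem hi)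
    have hfa : f a = 0 := by
      apply lexNN_neg_eq_zero h1
      have hh : -(f a) = ∑ i ∈ s', f i := by
        rw [neg_eq_iff_add_eq_zero]
        exact hsum
      rw [hh]; exact h2
    rw [hfa, zero_add] at hsum
    intro i hi
    rcases Finset.mem_insert.mp hi with rfl | hi'
    · exact hfa
    · exact ih (fun j hj => h j (Finset.mem_insert_of_mem hj)) hsum i hi'

/-- Direction comparison of two lex-positive vectors. -/
def NleW (u v : Fin m → ℝ) : Prop :=
  ∃ k l, Least u k ∧ Least v l ∧ (k < l ∨ (k = l ∧ LexNN (u k • v - v l • u)))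

theorem nleW_refl {u : Fin m → ℝ} (hu : LexPos u) : NleW u u := by
  obtain ⟨k, hk, _⟩ := lexPos_least hu
  exact ⟨k, k, hk, hk, Or.inr ⟨rfl, Or.inl (by simp)⟩⟩

theorem nleW_total {u v : Fin m → ℝ} (hu : LexPos u) (hv : LexPos v) :
    NleW u v ∨ NleW v u := by
  obtain ⟨k, hk, _⟩ := lexPos_least hu
  obtain ⟨l, hl, _⟩ := lexPos_least hv
  rcases lt_trichotomy k l with h | h | h
  · exact Or.inl ⟨k, l, hk, hl, Or.inl h⟩
  · subst h
    rcases lexPos_trichotomy (u k • v - v k • u) with h0 | hp | hn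
    · exact Or.inl ⟨k, k, hk, hl, Or.inr ⟨rfl, Or.inl h0⟩⟩
    · exact Or.inl ⟨k, k, hk, hl, Or.inr ⟨rfl, Or.inr hp⟩⟩
    · refine Or.inr ⟨k, k, hl, hk, Or.inr ⟨rfl, Or.inr ?_⟩⟩
      rw [← neg_sub]
      exact hn
  · exact Or.inr ⟨l, k, hl, hk, Or.inl h⟩

theorem nleW_trans {u v w : Fin m → ℝ} (hu : LexPos u) (hv : LexPos v) (hw : LexPos w)
    (h1 : NleW u v) (h2 : NleW v w) : NleW u w := by
  obtain ⟨k, l, hk, hl, hc1⟩ := h1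
  obtain ⟨l', k', hl', hk', hc2⟩ := h2
  have el : l = l' := least_unique hl hl'
  subst el
  rcases hc1 with h | ⟨he1, hd1⟩
  · -- k < l
    rcases hc2 with h' | ⟨he2, hd2⟩
    · exact ⟨k, k', hk, hk', Or.inl (h.trans h')⟩
    · exact ⟨k, k', hk, hk', Or.inl (he2 ▸ h)⟩
  · subst he1
    rcases hc2 with h' | ⟨he2, hd2⟩
    · exact ⟨k, k', hk, hk', Or.inl h'⟩
    · subst he2
      refine ⟨k, k, hk, hk', Or.inr ⟨rfl, ?_⟩⟩
      have hvk : 0 < v k := lexPos_pos_of_least hv hl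
      have huk : 0 < u k := lexPos_pos_of_least hu hk
      have hwk : 0 < w k := lexPos_pos_of_least hw hk'
      have key : v k • (u k • w - w k • u)
          = w k • (u k • v - v k • u) + u k • (v k • w - w k • v) := by
        funext j; simp; ring
      have : LexNN (v k • (u k • w - w k • u)) := by
        rw [key]
        rcases lexNN_smul (le_of_lt hwk) hd1 with h1 | h1 <;>
          rcases lexNN_smul (le_of_lt huk) hd2 with h2 | h2
        · left; rw [h1, h2]; simp
        · right; rw [h1]; simpa using h2
        · right; rw [h2]; simpa using h1
        · right
          obtain ⟨i1, hb1, hpos1⟩ := h1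
          obtain ⟨i2, hb2, hpos2⟩ := h2
          rcases lt_trichotomy i1 i2 with hlt | heq | hlt
          · exact ⟨i1, fun j hj => by simp [hb1 j hj, hb2 j (hj.trans hlt)],
              by simpa [hb2 i1 hlt] using hpos1⟩
          · subst heq
            exact ⟨i1, fun j hj => by simp [hb1 j hj, hb2 j hj], by
              have := add_pos hpos1 hpos2; simpa using this⟩
          · exact ⟨i2, fun j hj => by simp [hb2 j hj, hb1 j (hj.trans hlt)],
              by simpa [hb1 i2 hlt] using hpos2⟩
      have h5 := lexNN_smul (le_of_lt (inv_pos.mpr hvk)) this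
      rw [smul_smul, inv_mul_cancel₀ (ne_of_gt hvk), one_smul] at h5
      exact h5

def NltW (u v : Fin m → ℝ) : Prop := NleW u v ∧ ¬ NleW v u

theorem nleW_antisymm {u v : Fin m → ℝ} (hu : LexPos u) (hv : LexPos v)
    (h1 : NleW u v) (h2 : NleW v u) : ∃ t : ℝ, 0 < t ∧ v = t • u := by
  obtain ⟨k, l, hk, hl, hc1⟩ := h1
  obtain ⟨l', k', hl', hk', hc2⟩ := h2
  have el : l = l' := least_unique hl hl'
  have ek : k = k' := least_unique hk hk'
  subst el; subst ek
  have huk : 0 < u k := lexPos_pos_of_least hu hk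
  have hvl : 0 < v l := lexPos_pos_of_least hv hl
  rcases hc1 with h | ⟨he1, hd1⟩
  · rcases hc2 with h' | ⟨he2, _⟩
    · exact absurd (h.trans h') (lt_irrefl k)
    · exact absurd (he2 ▸ h) (lt_irrefl k)
  · subst he1
    rcases hc2 with h' | ⟨_, hd2⟩
    · exact absurd h' (lt_irrefl k)
    · have hz : u k • v - v k • u = 0 := by
        apply lexNN_neg_eq_zero hd1
        have : -(u k • v - v k • u) = v k • u - u k • v := by abel
        rw [this]
        exact hd2
      have : u k • v = v k • u := by
        have := sub_eq_zero.mp hz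
        exact this
      refine ⟨v k / u k, div_pos hvl huk, ?_⟩
      rw [div_eq_inv_mul, ← smul_smul, ← this, smul_smul, inv_mul_cancel₀ (ne_of_gt huk),
        one_smul]

/-- Separating functional family for the direction of `u` (with leading index `k`). -/
def gsep (u : Fin m → ℝ) (k : Fin m) (v : Fin m → ℝ) : Fin m → ℝ :=
  fun j => if j < k then -(u k * v j) else u k * v j - u j * v k

theorem gsep_self (u : Fin m → ℝ) (k : Fin m) (hk : Least u k) : gsep u k u = 0 := by
  funext j
  by_cases h : j < k <;> simp [gsep, h]
  · exact Or.inr (hk.1 j h)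
  · ring

theorem gsep_neg_of_below {u v : Fin m → ℝ} {k : Fin m} (hu : LexPos u) (hk : Least u k)
    (hv : LexPos v) (h : NltW v u) : LexPos (-(gsep u k v)) := by
  obtain ⟨l, hl, hvl⟩ := lexPos_least hv
  have huk : 0 < u k := lexPos_pos_of_least hu hk
  obtain ⟨l', k', hl', hk', hc⟩ := h.1
  have el : l = l' := least_unique hl hl'
  have ek : k = k' := least_unique hk hk'
  subst el; subst ek
  rcases hc with hlt | ⟨he, hd⟩
  · -- l < k
    refine ⟨l, ?_, ?_⟩
    · intro j hj
      have hj' : j < k := hj.trans hlt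
      simp [gsep, hj', hl.1 j hj]
    · simp [gsep, hlt]
      positivity
  · -- l = k, tails comparison
    rw [he] at hl hvl hd
    have hng : -(gsep u k v) = v k • u - u k • v := by
      funext j
      by_cases hj : j < k
      · simp [gsep, hj, hl.1 j hj, hk.1 j hj]
      · simp [gsep, hj]; ring
    rw [hng]
    rcases hd with h0 | hp
    · exfalso
      apply h.2
      refine ⟨k, k, hk, hl, Or.inr ⟨rfl, Or.inl ?_⟩⟩
      rw [show u k • v - v k • u = -(v k • u - u k • v) from (neg_sub _ _).symm, h0]
      simp
    · exact hp

theorem gsep_pos_of_above {u v : Fin m → ℝ} {k : Fin m} (hu : LexPos u) (hk : Least u k)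
    (hv : LexPos v) (h : NltW u v) : LexPos (gsep u k v) := by
  obtain ⟨l, hl, hvl⟩ := lexPos_least hv
  have huk : 0 < u k := lexPos_pos_of_least hu hk
  obtain ⟨k', l', hk', hl', hc⟩ := h.1
  have el : l = l' := least_unique hl hl'
  have ek : k = k' := least_unique hk hk'
  subst el; subst ek
  rcases hc with hlt | ⟨he, hd⟩
  · -- k < l
    refine ⟨l, ?_, ?_⟩
    · intro j hj
      by_cases hjk : j < k
      · simp only [gsep, if_pos hjk, hl.1 j hj, mul_zero, neg_zero]
      · simp [gsep, hjk, hl.1 j hj, hl.1 k hlt]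
    · have : ¬ l < k := not_lt.mpr (le_of_lt hlt)
      simp [gsep, this, hl.1 k hlt]
      positivity
  · rw [← he] at hl hvl hd
    have hng : gsep u k v = u k • v - v k • u := by
      funext j
      by_cases hj : j < k
      · simp [gsep, hj, hl.1 j hj, hk.1 j hj]
      · simp [gsep, hj]; ring
    rw [hng]
    rcases hd with h0 | hp
    · exfalso
      apply h.2
      refine ⟨k, k, hl, hk, Or.inr ⟨rfl, Or.inl ?_⟩⟩
      rw [show v k • u - u k • v = -(u k • v - v k • u) from (neg_sub _ _).symm, h0]
      simp
    · exact hp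

theorem nleW_smul_right {u : Fin m → ℝ} {t : ℝ} (hu : LexPos u) (ht : 0 < t) :
    NleW u (t • u) ∧ NleW (t • u) u := by
  obtain ⟨k, hk, hukpos⟩ := lexPos_least hu
  have hk' : Least (t • u) k :=
    ⟨fun j hj => by simp [hk.1 j hj], by simp; exact ⟨ne_of_gt ht, hk.2⟩⟩
  constructor
  · refine ⟨k, k, hk, hk', Or.inr ⟨rfl, Or.inl ?_⟩⟩
    funext j; simp; ring
  · refine ⟨k, k, hk', hk, Or.inr ⟨rfl, Or.inl ?_⟩⟩
    funext j; simp; ring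

/-- `gsep u k` as a linear map. -/
def gsepL (u : Fin m → ℝ) (k : Fin m) : (Fin m → ℝ) →ₗ[ℝ] (Fin m → ℝ) where
  toFun := gsep u k
  map_add' a b := by
    funext j
    by_cases h : j < k <;> simp [gsep, h] <;> ring
  map_smul' c a := by
    funext j
    by_cases h : j < k <;> simp [gsep, h] <;> ring

variable {V : Type*} [AddCommGroup V] [Module ℝ V]

/-- Core geometric fact: no nontrivial nonneg combinations of strictly-below and
strictly-above directions can differ by a multiple of the class direction. -/
theorem core_face (F : V →ₗ[ℝ] (Fin m → ℝ)) (x : V) (k : Fin m) (hk : Least (F x) k)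
    (A B : Set V)
    (hA : ∀ y ∈ A, LexPos (-(gsep (F x) k (F y))))
    (hB : ∀ y ∈ B, LexPos (gsep (F x) k (F y)))
    {a b : V} (ha : a ∈ nnspan A) (hb : b ∈ nnspan B) {t : ℝ}
    (hab : a - b = t • x) : a = 0 ∧ b = 0 := by
  classical
  set G : V →ₗ[ℝ] (Fin m → ℝ) := (gsepL (F x) k).comp F with hG
  have hGx : G x = 0 := gsep_self (F x) k hk
  obtain ⟨n, c, v, hc, hv, rfl⟩ := ha
  obtain ⟨p, d, w, hd, hw, rfl⟩ := hb
  have hGa : G (∑ i, c i • v i) = ∑ i, c i • G (v i) := by simp [map_sum]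
  have hGb : G (∑ i, d i • w i) = ∑ i, d i • G (w i) := by simp [map_sum]
  have hGdiff : G (∑ i, c i • v i) - G (∑ i, d i • w i) = 0 := by
    rw [← map_sub, hab, map_smul, hGx, smul_zero]
  have hterm_a : ∀ i : Fin n, LexNN (-(c i • G (v i))) := by
    intro i
    have : -(c i • G (v i)) = c i • (-(G (v i))) := by rw [smul_neg]
    rw [this]
    exact lexNN_smul (hc i) (Or.inr (hA (v i) (hv i)))
  have hterm_b : ∀ i : Fin p, LexNN (d i • G (w i)) := by
    intro i
    exact lexNN_smul (hd i) (Or.inr (hB (w i) (hw i)))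
  have hnnA : LexNN (-(G (∑ i, c i • v i))) := by
    rw [hGa, ← Finset.sum_neg_distrib]
    exact lexNN_sum _ _ fun i _ => hterm_a i
  have hnnB : LexNN (G (∑ i, d i • w i)) := by
    rw [hGb]
    exact lexNN_sum _ _ fun i _ => hterm_b i
  have heq : G (∑ i, c i • v i) = G (∑ i, d i • w i) := sub_eq_zero.mp hGdiff
  have hbz : G (∑ i, d i • w i) = 0 := by
    apply lexNN_neg_eq_zero hnnB
    rw [← heq]
    exact hnnA
  have haz : G (∑ i, c i • v i) = 0 := heq.trans hbz
  have hsum_a : ∑ i, (-(c i • G (v i))) = 0 := by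
    rw [Finset.sum_neg_distrib, ← hGa, haz, neg_zero]
  have hsum_b : ∑ i, (d i • G (w i)) = 0 := by rw [← hGb, hbz]
  have hca : ∀ i : Fin n, c i = 0 := by
    intro i
    have h0 : -(c i • G (v i)) = 0 :=
      lexNN_sum_eq_zero _ _ (fun i _ => hterm_a i) hsum_a i (Finset.mem_univ i)
    have h1 : c i • G (v i) = 0 := by simpa using congrArg Neg.neg h0
    rcases smul_eq_zero.mp h1 with h | h
    · exact h
    · exact absurd (neg_eq_zero.mpr (show gsep (F x) k (F (v i)) = 0 from h))
        (lexPos_ne_zero (hA (v i) (hv i)))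
  have hcb : ∀ i : Fin p, d i = 0 := by
    intro i
    have h0 : d i • G (w i) = 0 :=
      lexNN_sum_eq_zero _ _ (fun i _ => hterm_b i) hsum_b i (Finset.mem_univ i)
    rcases smul_eq_zero.mp h0 with h | h
    · exact h
    · exact absurd h (lexPos_ne_zero (hB (w i) (hw i)))
  constructor
  · rw [Finset.sum_eq_zero]
    intro i _
    rw [hca i, zero_smul]
  · rw [Finset.sum_eq_zero]
    intro i _
    rw [hcb i, zero_smul]


end LexBasics

section Sep
open Module

/-- Separation: a salient convex cone in a nontrivial f.d. normed space admits a nonzero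
nonnegative functional. -/
theorem sep_euclidean {d : ℕ} (hd : 0 < d) (C : Set (EuclideanSpace ℝ (Fin d)))
    (hconv : Convex ℝ C) (h0 : (0 : EuclideanSpace ℝ (Fin d)) ∈ C)
    (hcone : ∀ (t : ℝ), 0 ≤ t → ∀ x ∈ C, t • x ∈ C)
    (hsal : ∀ x, x ∈ C → -x ∈ C → x = 0) :
    ∃ f : EuclideanSpace ℝ (Fin d) →ₗ[ℝ] ℝ, f ≠ 0 ∧ ∀ x ∈ C, 0 ≤ f x := by
  have hne : Nontrivial (EuclideanSpace ℝ (Fin d)) := by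
    have : Nontrivial (Fin d) → True := fun _ => trivial
    refine ⟨EuclideanSpace.single ⟨0, hd⟩ 1, 0, ?_⟩
    intro h
    have := congrArg (fun v : EuclideanSpace ℝ (Fin d) => v ⟨0, hd⟩) h
    simp at this
  -- closure of C is not everything
  have hclos : closure C ≠ Set.univ := by
    intro huniv
    have hdense : Dense C := by
      rw [dense_iff_closure_eq, huniv]
    have haff : affineSpan ℝ C = ⊤ := by
      have h1 : (affineSpan ℝ C : Set (EuclideanSpace ℝ (Fin d))) ⊇ closure C := by
        have : IsClosed (affineSpan ℝ C : Set (EuclideanSpace ℝ (Fin d))) :=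
          (affineSpan ℝ C).closed_of_finiteDimensional
        exact this.closure_subset_iff.mpr (subset_affineSpan ℝ C) |>.trans (le_refl _)
      rw [huniv] at h1
      ext p
      simp only [AffineSubspace.mem_top, iff_true]
      exact h1 (Set.mem_univ p)
    have hint : (interior C).Nonempty :=
      (hconv.interior_nonempty_iff_affineSpan_eq_top).mpr haff
    -- -C is dense too
    have hdense' : Dense (-C : Set (EuclideanSpace ℝ (Fin d))) := by
      have hmap : IsOpenMap (fun p : EuclideanSpace ℝ (Fin d) => -p) :=
        (Homeomorph.neg (EuclideanSpace ℝ (Fin d))).isOpenMap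
      have := hdense.preimage hmap
      convert this using 1
      ext p; simp
    obtain ⟨q, hq1, hq2⟩ := hdense'.exists_mem_open isOpen_interior hint
    have hq3 : q ∈ C := interior_subset hq2
    have hq4 : -q ∈ C := by simpa using hq1
    have hq0 : q = 0 := hsal q hq3 hq4
    rw [hq0] at hq2
    -- 0 is interior point: find small nonzero vector in C ∩ -C
    obtain ⟨ε, hε, hball⟩ := Metric.isOpen_iff.mp isOpen_interior 0 hq2
    obtain ⟨v, hv⟩ := exists_ne (0 : EuclideanSpace ℝ (Fin d))
    set w := (ε / (2 * ‖v‖)) • v with hw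
    have hvnorm : 0 < ‖v‖ := norm_pos_iff.mpr hv
    have hwnz : w ≠ 0 := by
      apply smul_ne_zero _ hv
      positivity
    have hwnorm : ‖w‖ < ε := by
      rw [hw, norm_smul]
      simp only [Real.norm_eq_abs]
      rw [abs_of_pos (by positivity)]
      rw [div_mul_eq_mul_div, mul_comm]
      rw [div_lt_iff₀ (by positivity)]
      nlinarith
    have hwC : w ∈ C := interior_subset (hball (by simp [dist_eq_norm, hwnorm]))
    have hwC' : -w ∈ C := interior_subset (hball (by simp [dist_eq_norm, hwnorm]))
    exact hwnz (hsal w hwC hwC')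
  -- pick a point outside, separate
  obtain ⟨z, hz⟩ : ∃ z, z ∉ closure C := by
    by_contra hc
    push_neg at hc
    exact hclos (Set.eq_univ_of_forall hc)
  obtain ⟨g, s, hgs, hsz⟩ := geometric_hahn_banach_closed_point
    (hconv.closure) isClosed_closure hz
  have hs0 : 0 < s := by
    have := hgs 0 (subset_closure h0)
    simpa using this
  have hgneg : ∀ x ∈ C, g x ≤ 0 := by
    intro x hx
    by_contra hgx
    push_neg at hgx
    have ht : 0 ≤ (s + 1) / g x := by positivity
    have := hgs (((s + 1) / g x) • x) (subset_closure (hcone _ ht x hx))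
    rw [map_smul] at this
    rw [smul_eq_mul, div_mul_cancel₀ _ (ne_of_gt hgx)] at this
    linarith
  refine ⟨-(g.toLinearMap), ?_, ?_⟩
  · intro h
    have : g z = 0 := by
      have := congrArg (fun φ : EuclideanSpace ℝ (Fin d) →ₗ[ℝ] ℝ => φ z) h
      simpa using this
    linarith
  · intro x hx
    simpa using hgneg x hx

/-- A nonzero nonnegative functional on a salient `nnspan` cone. -/
theorem sep_abstract {V : Type u} [AddCommGroup V] [Module ℝ V] [FiniteDimensional ℝ V]
    (hpos : 0 < finrank ℝ V) (X : Set V)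
    (hsal : ∀ x : V, x ∈ nnspan X → -x ∈ nnspan X → x = 0) :
    ∃ f : V →ₗ[ℝ] ℝ, f ≠ 0 ∧ ∀ x ∈ nnspan X, 0 ≤ f x := by
  set d := finrank ℝ V with hd
  have hEfr : finrank ℝ (EuclideanSpace ℝ (Fin d)) = d := finrank_euclideanSpace_fin
  obtain ⟨e⟩ : Nonempty (V ≃ₗ[ℝ] EuclideanSpace ℝ (Fin d)) :=
    ⟨LinearEquiv.ofFinrankEq _ _ (by rw [hEfr])⟩
  set C := nnspan X with hC
  set D := e '' C with hD
  have hconvD : Convex ℝ D := (nnspan_convex X).linear_image e.toLinearMap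
  have h0D : (0 : EuclideanSpace ℝ (Fin d)) ∈ D := ⟨0, nnspan_zero_mem X, map_zero _⟩
  have hconeD : ∀ (t : ℝ), 0 ≤ t → ∀ y ∈ D, t • y ∈ D := by
    rintro t ht y ⟨x, hx, rfl⟩
    exact ⟨t • x, nnspan_smul_mem ht hx, map_smul _ _ _⟩
  have hsalD : ∀ y, y ∈ D → -y ∈ D → y = 0 := by
    rintro y ⟨x, hx, rfl⟩ ⟨x', hx', hx'e⟩
    have : x' = -x := by
      apply e.injective
      rw [hx'e, map_neg]
    rw [this] at hx'
    rw [hsal x hx (by simpa using hx'), map_zero]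
  obtain ⟨fE, hfE0, hfEpos⟩ := sep_euclidean hpos D hconvD h0D hconeD hsalD
  refine ⟨fE ∘ₗ (e : V →ₗ[ℝ] EuclideanSpace ℝ (Fin d)), ?_, ?_⟩
  · intro h
    apply hfE0
    ext y
    have := congrArg (fun φ : V →ₗ[ℝ] ℝ => φ (e.symm y)) h
    simpa using this
  · intro x hx
    exact hfEpos _ ⟨x, hx, rfl⟩

/-- Existence of an injective linear map to lex-ordered coordinates, positive on `X`. -/
theorem exists_lex_functionals : ∀ (k : ℕ), ∀ {V : Type u} [AddCommGroup V] [Module ℝ V]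
    [FiniteDimensional ℝ V], finrank ℝ V ≤ k → ∀ (X : Set V), (0 : V) ∉ X →
    (∀ x : V, x ∈ nnspan X → -x ∈ nnspan X → x = 0) →
    ∃ (m : ℕ) (F : V →ₗ[ℝ] (Fin m → ℝ)), Function.Injective F ∧ ∀ x ∈ X, LexPos (F x) := by
  intro k
  induction k with
  | zero =>
    intro V _ _ _ hk X h0 _
    have hsub : Subsingleton V := by
      rw [← Module.finrank_zero_iff (R := ℝ)]
      omega
    refine ⟨0, 0, fun a b _ => Subsingleton.elim a b, fun x hx => ?_⟩
    exact absurd (Subsingleton.elim x 0 ▸ hx) h0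
  | succ k ih =>
    intro V _ _ _ hk X h0 hsal
    by_cases hk' : finrank ℝ V ≤ k
    · exact ih hk' X h0 hsal
    have hfr : 0 < finrank ℝ V := by omega
    obtain ⟨f, hf0, hfC⟩ := sep_abstract hfr X hsal
    set W := LinearMap.ker f with hW
    -- finrank of the kernel
    have hrange : 0 < finrank ℝ (LinearMap.range f) := by
      rw [Module.finrank_pos_iff]
      obtain ⟨v, hv⟩ := DFunLike.ne_iff.mp hf0
      refine ⟨⟨f v, ⟨v, rfl⟩⟩, 0, fun hcon => hv ?_⟩
      have := congrArg Subtype.val hcon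
      simpa using this
    have hker : finrank ℝ W ≤ k := by
      have := LinearMap.finrank_range_add_finrank_ker f
      rw [hW]
      omega
    -- recurse
    set X' : Set W := {w : W | (w : V) ∈ X} with hX'
    have h0' : (0 : W) ∉ X' := h0
    have hsal' : ∀ w : W, w ∈ nnspan X' → -w ∈ nnspan X' → w = 0 := by
      intro w hw hw'
      have him : W.subtype '' X' ⊆ X := by rintro _ ⟨w', hw', rfl⟩; exact hw'
      have h1 : (w : V) ∈ nnspan X := nnspan_mono him (nnspan_map W.subtype hw)
      have h2 : -(w : V) ∈ nnspan X := by
        have := nnspan_mono him (nnspan_map W.subtype hw')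
        simpa using this
      have := hsal _ h1 h2
      exact Subtype.ext this
    obtain ⟨m', F', hinj', hpos'⟩ := ih hker X' h0' hsal'
    obtain ⟨g, hg⟩ := W.subtype.exists_leftInverse_of_injective W.ker_subtype
    have hgx : ∀ (x : V) (hx : x ∈ W), g x = ⟨x, hx⟩ := by
      intro x hx
      have := LinearMap.ext_iff.mp hg ⟨x, hx⟩
      simpa using this
    set F : V →ₗ[ℝ] (Fin (m' + 1) → ℝ) :=
      LinearMap.pi (Fin.cons f (fun j => (LinearMap.proj j) ∘ₗ (F' ∘ₗ g))) with hF
    have hF0 : ∀ x : V, F x 0 = f x := fun x => by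
      simp [hF, LinearMap.pi_apply]
    have hFs : ∀ (x : V) (j : Fin m'), F x j.succ = F' (g x) j := fun x j => by
      simp [hF, LinearMap.pi_apply]
    refine ⟨m' + 1, F, ?_, ?_⟩
    · -- injectivity
      have hker0 : ∀ x : V, F x = 0 → x = 0 := by
        intro x hx
        have hfx : f x = 0 := by rw [← hF0 x, hx]; rfl
        have hxW : x ∈ W := hfx
        have : F' (g x) = 0 := by
          funext j
          rw [← hFs x j, hx]
          rfl
        rw [hgx x hxW] at this
        have h0' : (⟨x, hxW⟩ : W) = 0 := hinj' (by rw [this, map_zero])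
        simpa using congrArg (W.subtype) h0'
      intro a b hab
      have : a - b = 0 := hker0 _ (by rw [map_sub, hab, sub_self])
      exact sub_eq_zero.mp this
    · -- lex positivity
      intro x hx
      have hfx : 0 ≤ f x := hfC x (mem_nnspan_self hx)
      rcases eq_or_lt_of_le hfx with heq | hlt
      · have hxW : x ∈ W := heq.symm
        obtain ⟨i', hbelow, hposi⟩ := hpos' ⟨x, hxW⟩ hx
        refine ⟨i'.succ, ?_, ?_⟩
        · intro j hj
          induction j using Fin.cases with
          | zero => rw [hF0]; exact heq.symm
          | succ jj =>
            have hjj' : jj < i' := by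
              rwa [Fin.succ_lt_succ_iff] at hj
            rw [hFs, hgx x hxW]
            exact hbelow jj hjj' 
        · rw [hFs, hgx x hxW]
          exact hposi
      · refine ⟨0, ?_, ?_⟩
        · intro j hj
          exact absurd hj (Fin.not_lt_zero j)
        · rw [hF0]
          exact hlt


end Sep

end CvxAux

/-- Let `V` be finite-dimensional and `X ⊆ V \ {0}` with
`nnspan X ∩ (-nnspan X) = {0}`. Then any convex preorder `⪯` on `X` admits a refining
convex order, i.e. a convex preorder `⪯'` such that `x ≺ y` implies `x ≺' y`, and
every `⪯'`-equivalence class has the form `X ∩ l` for a line `l` through the origin. -/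
theorem exists_convex_order_refining {V : Type*} [AddCommGroup V] [Module ℝ V]
    [FiniteDimensional ℝ V]
    (X : Set V) (hX0 : (0 : V) ∉ X)
    (hsal : nnspan X ∩ (-nnspan X) = {0})
    (le : V → V → Prop) (hconv : IsConvexPreorder X le) :
    ∃ le' : V → V → Prop,
      IsConvexPreorder X le' ∧
      (∀ x ∈ X, ∀ y ∈ X, (le x y ∧ ¬ le y x) → (le' x y ∧ ¬ le' y x)) ∧
      (∀ x ∈ X, ∃ v : V, eqClass le' x X = X ∩ {w | ∃ t : ℝ, w = t • v}) := by
  classical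
  obtain ⟨hrefl, htrans, htot, hface⟩ := hconv
  obtain ⟨m, F, hinj, hpos⟩ := CvxAux.exists_lex_functionals (Module.finrank ℝ V) le_rfl X hX0
    (fun x hx hnx => by
      have hmem : x ∈ nnspan X ∩ (-nnspan X) := ⟨hx, by rwa [Set.mem_neg]⟩
      rwa [hsal] at hmem)
  set le' : V → V → Prop := fun y z =>
    (le y z ∧ ¬ le z y) ∨ (le y z ∧ le z y ∧ CvxAux.NleW (F y) (F z)) with hle'
  have hxne : ∀ x ∈ X, x ≠ (0 : V) := fun x hx h => hX0 (h ▸ hx)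
  -- the classes of `le'` are exactly the rays
  have hclass : ∀ x ∈ X, eqClass le' x X = X ∩ {w | ∃ t : ℝ, w = t • x} := by
    intro x hx
    ext y
    constructor
    · rintro ⟨hy, h1, h2⟩
      have hxy : le x y := h1.elim (fun h => h.1) (fun h => h.1)
      have hyx : le y x := h2.elim (fun h => h.1) (fun h => h.1)
      have hN1 : CvxAux.NleW (F x) (F y) := by
        rcases h1 with ⟨_, hc⟩ | ⟨_, _, hN⟩
        · exact absurd hyx hc
        · exact hN
      have hN2 : CvxAux.NleW (F y) (F x) := by
        rcases h2 with ⟨_, hc⟩ | ⟨_, _, hN⟩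
        · exact absurd hxy hc
        · exact hN
      obtain ⟨t, ht, hty⟩ := CvxAux.nleW_antisymm (hpos x hx) (hpos y hy) hN1 hN2
      refine ⟨hy, t, ?_⟩
      apply hinj
      rw [hty, map_smul]
    · rintro ⟨hy, t, rfl⟩
      have htne : t ≠ 0 := by
        rintro rfl
        exact hxne _ hy (zero_smul ℝ x)
      have htpos : 0 < t := by
        rcases lt_trichotomy t 0 with hneg | hz | hp
        · exfalso
          have h1 : t • x ∈ nnspan X := CvxAux.mem_nnspan_self hy
          have h2 : -(t • x) ∈ nnspan X := by
            have : -(t • x) = (-t) • x := by rw [neg_smul]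
            rw [this]
            exact CvxAux.nnspan_smul_mem (by linarith) (CvxAux.mem_nnspan_self hx)
          have hmem : t • x ∈ nnspan X ∩ (-nnspan X) := ⟨h1, by rwa [Set.mem_neg]⟩
          rw [hsal] at hmem
          exact hxne _ hy hmem
        · exact absurd hz htne
        · exact hp
      have hxcls : x ∈ eqClass le x X := ⟨hx, hrefl x hx, hrefl x hx⟩
      have hxy : le x (t • x) := by
        by_contra hno
        have hyx : le (t • x) x := (htot x hx (t • x) hy).resolve_left hno
        have hbelow : t • x ∈ nnspan (strictBelow le x X) :=
          CvxAux.mem_nnspan_self ⟨hy, hyx, hno⟩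
        have hzero : (0 : V) ∈ nnspan (strictAbove le x X) := CvxAux.nnspan_zero_mem _
        have hdiff : t • x - 0 ∈ Submodule.span ℝ (eqClass le x X) := by
          rw [sub_zero]
          exact Submodule.smul_mem _ t (Submodule.subset_span hxcls)
        have := (hface x hx (t • x) hbelow 0 hzero hdiff).1
        exact hxne _ hy this
      have hyx : le (t • x) x := by
        by_contra hno
        have hxy' : le x (t • x) := hxy
        have habove : t • x ∈ nnspan (strictAbove le x X) :=
          CvxAux.mem_nnspan_self ⟨hy, hxy', hno⟩
        have hzero : (0 : V) ∈ nnspan (strictBelow le x X) := CvxAux.nnspan_zero_mem _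
        have hdiff : (0 : V) - t • x ∈ Submodule.span ℝ (eqClass le x X) := by
          rw [zero_sub, ← neg_smul]
          exact Submodule.smul_mem _ (-t) (Submodule.subset_span hxcls)
        have := (hface x hx 0 hzero (t • x) habove hdiff).2
        exact hxne _ hy this
      have hNs := CvxAux.nleW_smul_right (hpos x hx) htpos
      have hFt : F (t • x) = t • F x := map_smul F t x
      exact ⟨hy, Or.inr ⟨hxy, hyx, by rw [hFt]; exact hNs.1⟩,
        Or.inr ⟨hyx, hxy, by rw [hFt]; exact hNs.2⟩⟩
  refine ⟨le', ⟨?_, ?_, ?_, ?_⟩, ?_, ?_⟩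
  · -- reflexivity
    intro x hx
    exact Or.inr ⟨hrefl x hx, hrefl x hx, CvxAux.nleW_refl (hpos x hx)⟩
  · -- transitivity
    intro x hx y hy z hz h1 h2
    have hxy : le x y := h1.elim (fun h => h.1) (fun h => h.1)
    have hyz : le y z := h2.elim (fun h => h.1) (fun h => h.1)
    have hxz : le x z := htrans x hx y hy z hz hxy hyz
    rcases h1 with ⟨_, hnyx⟩ | ⟨_, hyx, hN1⟩
    · refine Or.inl ⟨hxz, fun hzx => hnyx (htrans y hy z hz x hx hyz hzx)⟩
    rcases h2 with ⟨_, hnzy⟩ | ⟨_, hzy, hN2⟩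
    · refine Or.inl ⟨hxz, fun hzx => hnzy (htrans z hz x hx y hy hzx hxy)⟩
    · exact Or.inr ⟨hxz, htrans z hz y hy x hx hzy hyx,
        CvxAux.nleW_trans (hpos x hx) (hpos y hy) (hpos z hz) hN1 hN2⟩
  · -- totality
    intro x hx y hy
    rcases htot x hx y hy with h | h
    · by_cases h' : le y x
      · rcases CvxAux.nleW_total (hpos x hx) (hpos y hy) with hN | hN
        · exact Or.inl (Or.inr ⟨h, h', hN⟩)
        · exact Or.inr (Or.inr ⟨h', h, hN⟩)
      · exact Or.inl (Or.inl ⟨h, h'⟩)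
    · by_cases h' : le x y
      · rcases CvxAux.nleW_total (hpos x hx) (hpos y hy) with hN | hN
        · exact Or.inl (Or.inr ⟨h', h, hN⟩)
        · exact Or.inr (Or.inr ⟨h, h', hN⟩)
      · exact Or.inr (Or.inl ⟨h, h'⟩)
  · -- convexity (face condition)
    intro x hx xm hxm xp hxp hspan
    obtain ⟨k, hk, -⟩ := CvxAux.lexPos_least (hpos x hx)
    -- the span of the new class is contained in the line through x
    have hspanline : Submodule.span ℝ (eqClass le' x X) ≤ Submodule.span ℝ {x} := by
      apply Submodule.span_le.mpr
      intro w hw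
      rw [hclass x hx] at hw
      obtain ⟨-, t, rfl⟩ := hw
      exact Submodule.smul_mem _ t (Submodule.mem_span_singleton_self x)
    obtain ⟨t, ht⟩ := Submodule.mem_span_singleton.mp (hspanline hspan)
    -- decompose the below and above sets
    set Bx : Set V := {y | y ∈ X ∧ (le x y ∧ le y x) ∧ CvxAux.NltW (F y) (F x)} with hBx
    set Ax : Set V := {y | y ∈ X ∧ (le x y ∧ le y x) ∧ CvxAux.NltW (F x) (F y)} with hAx
    have hBeq : strictBelow le' x X = strictBelow le x X ∪ Bx := by
      ext y
      constructor
      · rintro ⟨hy, hyx, hnxy⟩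
        rcases hyx with ⟨h1, h2⟩ | ⟨h1, h2, h3⟩
        · exact Or.inl ⟨hy, h1, h2⟩
        · exact Or.inr ⟨hy, ⟨h2, h1⟩, h3, fun hN => hnxy (Or.inr ⟨h2, h1, hN⟩)⟩
      · rintro (⟨hy, h1, h2⟩ | ⟨hy, ⟨hxy, hyx⟩, h3, h4⟩)
        · exact ⟨hy, Or.inl ⟨h1, h2⟩,
            fun h => h.elim (fun hh => hh.2 h1) (fun hh => h2 hh.1)⟩
        · exact ⟨hy, Or.inr ⟨hyx, hxy, h3⟩,
            fun h => h.elim (fun hh => hh.2 hyx) (fun hh => h4 hh.2.2)⟩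
    have hAeq : strictAbove le' x X = strictAbove le x X ∪ Ax := by
      ext y
      constructor
      · rintro ⟨hy, hxy, hnyx⟩
        rcases hxy with ⟨h1, h2⟩ | ⟨h1, h2, h3⟩
        · exact Or.inl ⟨hy, h1, h2⟩
        · exact Or.inr ⟨hy, ⟨h1, h2⟩, h3, fun hN => hnyx (Or.inr ⟨h2, h1, hN⟩)⟩
      · rintro (⟨hy, h1, h2⟩ | ⟨hy, ⟨hxy, hyx⟩, h3, h4⟩)
        · exact ⟨hy, Or.inl ⟨h1, h2⟩,
            fun h => h.elim (fun hh => hh.2 h1) (fun hh => h2 hh.1)⟩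
        · exact ⟨hy, Or.inr ⟨hxy, hyx, h3⟩,
            fun h => h.elim (fun hh => hh.2 hxy) (fun hh => h4 hh.2.2)⟩
    rw [hBeq] at hxm
    rw [hAeq] at hxp
    obtain ⟨m1, hm1, a, haB, hma⟩ := CvxAux.nnspan_union_split hxm
    obtain ⟨p1, hp1, b, hbA, hpb⟩ := CvxAux.nnspan_union_split hxp
    have hxcls : x ∈ eqClass le x X := ⟨hx, hrefl x hx, hrefl x hx⟩
    have hBsub : Bx ⊆ eqClass le x X := fun y hy => ⟨hy.1, hy.2.1.1, hy.2.1.2⟩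
    have hAsub : Ax ⊆ eqClass le x X := fun y hy => ⟨hy.1, hy.2.1.1, hy.2.1.2⟩
    have haspan : a ∈ Submodule.span ℝ (eqClass le x X) :=
      Submodule.span_mono hBsub (CvxAux.nnspan_subset_span haB)
    have hbspan : b ∈ Submodule.span ℝ (eqClass le x X) :=
      Submodule.span_mono hAsub (CvxAux.nnspan_subset_span hbA)
    have htx : t • x ∈ Submodule.span ℝ (eqClass le x X) :=
      Submodule.smul_mem _ t (Submodule.subset_span hxcls)
    have hold : m1 - p1 ∈ Submodule.span ℝ (eqClass le x X) := by
      have : m1 - p1 = (xm - xp) - a + b := by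
        rw [hma, hpb]; abel
      rw [this, ← ht]
      exact Submodule.add_mem _ (Submodule.sub_mem _ htx haspan) hbspan
    obtain ⟨hm10, hp10⟩ := hface x hx m1 hm1 p1 hp1 hold
    have hab : a - b = t • x := by
      have : xm - xp = a - b := by rw [hma, hpb, hm10, hp10]; abel
      rw [← this]
      exact ht.symm
    have hcore := CvxAux.core_face F x k hk Bx Ax
      (fun y hy => CvxAux.gsep_neg_of_below (hpos x hx) hk (hpos y hy.1) hy.2.2)
      (fun y hy => CvxAux.gsep_pos_of_above (hpos x hx) hk (hpos y hy.1) hy.2.2)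
      haB hbA hab
    refine ⟨?_, ?_⟩
    · rw [hma, hm10, hcore.1, add_zero]
    · rw [hpb, hp10, hcore.2, add_zero]
  · -- refinement
    intro x hx y hy ⟨h1, h2⟩
    refine ⟨Or.inl ⟨h1, h2⟩, fun h => ?_⟩
    exact h2 (h.elim (fun hh => hh.1) (fun hh => hh.1))
  · -- classes are rays
    intro x hx
    exact ⟨x, hclass x hx⟩
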